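/- Let α, β > 0, (v, θ, ω) ∈ ℝ³ with v ≠ 0, ω_d ∈ ℝ with ω_d ≠ ω, s₁ = sgn(ω_d − ω), s₃ = s₁, and let s₂ ∈ {−1,1} satisfy s₂·v = −|v|. Define t₁ = β(ω² − ω_d²)/(2α²|v|) − θβ/(s₁α|v|) − ω/(s₁α), t₃ = β(ω_d² − ω²)/(2α²|v|) + θβ/(s₁α|v|) + ω_d/(s₁α), and t₂ = |v|/β. Then the general three-phase final state from (v, θ, ω) with durations t₁, t₂, t₃ and signs s₁, s₂, s₃ equals (0, 0, ω_d). -/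

import Mathlib

/-- The general three-phase final state `(v_f, θ_f, ω_f)`: angular acceleration `s₁ * α`
for time `t₁`, linear acceleration `s₂ * β` for time `t₂`, angular acceleration
`s₃ * α` for time `t₃`. -/
noncomputable def threePhaseFinal (α β v θ ω t₁ t₂ t₃ s₁ s₂ s₃ : ℝ) : ℝ × ℝ × ℝ :=
  (v + s₂ * β * t₂,
   θ + ω * t₁ + s₁ * α * t₁ ^ 2 / 2 + (ω + s₁ * α * t₁) * (t₂ + t₃) + s₃ * α * t₃ ^ 2 / 2,
   ω + s₁ * α * t₁ + s₃ * α * t₃)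

theorem stmt14 (α β v θ ω ωd : ℝ) (hα : 0 < α) (hβ : 0 < β)
    (hv : v ≠ 0) (hωd : ωd ≠ ω)
    (s₁ s₂ s₃ : ℝ)
    (hs₁ : s₁ = if 0 < ωd - ω then (1 : ℝ) else -1) (hs₃ : s₃ = s₁)
    (hs₂ : s₂ = -1 ∨ s₂ = 1) (hs₂v : s₂ * v = -|v|)
    (t₁ t₂ t₃ : ℝ)
    (ht₁ : t₁ = β * (ω ^ 2 - ωd ^ 2) / (2 * α ^ 2 * |v|) - θ * β / (s₁ * α * |v|) - ω / (s₁ * α))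
    (ht₃ : t₃ = β * (ωd ^ 2 - ω ^ 2) / (2 * α ^ 2 * |v|) + θ * β / (s₁ * α * |v|) + ωd / (s₁ * α))
    (ht₂ : t₂ = |v| / β) :
    threePhaseFinal α β v θ ω t₁ t₂ t₃ s₁ s₂ s₃ = (0, 0, ωd) := by
  have hv' : |v| ≠ 0 := abs_ne_zero.mpr hv
  have hvv : v = -(s₂ * |v|) := by
    rcases hs₂ with h | h <;> subst h <;> nlinarith [hs₂v]
  have hs1 : s₁ = 1 ∨ s₁ = -1 := by
    rw [hs₁]; split <;> simp
  subst hs₃ ht₁ ht₂ ht₃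
  unfold threePhaseFinal
  refine Prod.ext ?_ (Prod.ext ?_ ?_) <;> simp only
  · field_simp; linear_combination hvv
  · rcases hs1 with h | h <;> subst h <;> field_simp <;> ring
  · rcases hs1 with h | h <;> subst h <;> field_simp <;> ring
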